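/- Let (E,d) be a Polish space, (ℙ_n) a sequence of Borel probability measures converging weakly to ℙ, and (Φ_n) a uniformly bounded sequence of continuous functions E → ℝ converging uniformly on every compact subset of E to a continuous function Φ. Then ∫_E Φ_n dℙ_n → ∫_E Φ dℙ. -/

import Mathlib

open MeasureTheory Filter
open scoped Topology

open Set Metric
open scoped ENNReal

lemma weak_tight {E : Type*}
    [MetricSpace E] [CompleteSpace E] [SecondCountableTopology E]
    [MeasurableSpace E] [BorelSpace E]
    (P : ℕ → ProbabilityMeasure E) (Plim : ProbabilityMeasure E)
    (hweak : Tendsto P atTop (𝓝 Plim)) {δ : ℝ≥0∞} (hδ : 0 < δ) :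
    ∃ K : Set E, IsCompact K ∧ ∀ n, (P n : Measure E) Kᶜ ≤ δ := by
  have hne : Nonempty E := by
    rcases isEmpty_or_nonempty E with h | h
    · have h0 : (Plim : Measure E) Set.univ = 1 := measure_univ
      rw [Set.univ_eq_empty_iff.mpr h, measure_empty] at h0
      simp at h0
    · exact h
  set x : ℕ → E := TopologicalSpace.denseSeq E with hx
  have hdense : DenseRange x := TopologicalSpace.denseRange_denseSeq E
  set G : ℕ → ℕ → Set E := fun k m => ⋃ i ∈ Finset.range m, ball (x i) (1 / (k + 1)) with hG
  have hGopen : ∀ k m, IsOpen (G k m) := fun k m =>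
    isOpen_biUnion fun i _ => isOpen_ball
  have hGmono : ∀ k, Monotone (G k) := by
    intro k m m' hmm'
    exact Set.biUnion_subset_biUnion_left (Finset.range_subset_range.mpr hmm')
  have hGunion : ∀ k, (⋃ m, G k m) = Set.univ := by
    intro k
    apply Set.eq_univ_of_forall
    intro y
    have hpos : (0 : ℝ) < 1 / (k + 1) := by positivity
    obtain ⟨i, hi⟩ := hdense.exists_dist_lt y hpos
    exact Set.mem_iUnion.mpr ⟨i + 1, Set.mem_biUnion (Finset.mem_range.mpr (Nat.lt_succ_self i))
      (by simpa [mem_ball] using hi)⟩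
  -- measure of complements tends to zero for every fixed probability measure
  have hzero : ∀ (μ : ProbabilityMeasure E) (k : ℕ),
      Tendsto (fun m => (μ : Measure E) (G k m)ᶜ) atTop (𝓝 0) := by
    intro μ k
    have h := tendsto_measure_iInter_atTop (μ := (μ : Measure E))
      (s := fun m => (G k m)ᶜ)
      (fun m => ((hGopen k m).isClosed_compl.measurableSet).nullMeasurableSet)
      (fun m m' h => Set.compl_subset_compl.mpr (hGmono k h))
      ⟨0, measure_ne_top _ _⟩
    have : (⋂ m, (G k m)ᶜ) = (∅ : Set E) := by
      rw [← Set.compl_iUnion, hGunion k, Set.compl_univ]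
    rw [this] at h
    simpa [Function.comp_def] using h
  -- main step: for each k there is M covering everything up to δ/2^(k+1)
  have step : ∀ k : ℕ, ∃ M : ℕ, ∀ n, (P n : Measure E) (G k M)ᶜ ≤ δ / 2 ^ (k + 1) := by
    intro k
    set ε := δ / 2 ^ (k + 1) with hε
    have hεpos : 0 < ε := ENNReal.div_pos hδ.ne' (by simp)
    -- choose m₀ with Plim-small complement
    obtain ⟨m₀, hm₀⟩ := ((hzero Plim k).eventually_lt_const
      (by exact ENNReal.half_pos hεpos.ne' : 0 < ε / 2)).exists
    -- portmanteau: limsup of closed set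
    have hlimsup : (atTop.limsup fun n => (P n : Measure E) (G k m₀)ᶜ)
        ≤ (Plim : Measure E) (G k m₀)ᶜ :=
      ProbabilityMeasure.limsup_measure_closed_le_of_tendsto hweak (hGopen k m₀).isClosed_compl
    have hev : ∀ᶠ n in atTop, (P n : Measure E) (G k m₀)ᶜ < ε :=
      eventually_lt_of_limsup_lt (lt_of_le_of_lt hlimsup (lt_of_lt_of_le hm₀
        (ENNReal.half_le_self)))
    obtain ⟨N, hN⟩ := hev.exists_forall_of_atTop
    -- handle n < N
    have hfin : ∀ᶠ m in atTop, ∀ n ∈ Finset.range N, (P n : Measure E) (G k m)ᶜ < ε := by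
      rw [Filter.eventually_all_finset]
      intro n _
      exact (hzero (P n) k).eventually_lt_const hεpos
    obtain ⟨M, hM, hMge⟩ := (hfin.and (eventually_ge_atTop m₀)).exists
    refine ⟨M, fun n => ?_⟩
    rcases lt_or_ge n N with h | h
    · exact (hM n (Finset.mem_range.mpr h)).le
    · calc (P n : Measure E) (G k M)ᶜ ≤ (P n : Measure E) (G k m₀)ᶜ :=
            measure_mono (Set.compl_subset_compl.mpr (hGmono k hMge))
        _ ≤ ε := (hN n h).le
  choose M hM using step
  refine ⟨⋂ k, closure (G k (M k)), ?_, ?_⟩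
  · -- compactness
    apply TotallyBounded.isCompact_of_isClosed
    · rw [Metric.totallyBounded_iff]
      intro r hr
      obtain ⟨k, hk⟩ := exists_nat_one_div_lt (ε := r) hr
      refine ⟨x '' (Set.Iio (M k)), (Set.finite_Iio _).image x, ?_⟩
      have h1 : (⋂ j, closure (G j (M j))) ⊆ closure (G k (M k)) := Set.iInter_subset _ k
      refine h1.trans ?_
      have h2 : closure (G k (M k)) ⊆ ⋃ i ∈ Finset.range (M k), closedBall (x i) (1 / (k + 1)) := by
        apply closure_minimal
        · exact Set.iUnion₂_mono fun i _ => ball_subset_closedBall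
        · exact Set.Finite.isClosed_biUnion (Finset.finite_toSet _)
            fun i _ => isClosed_closedBall
      refine h2.trans ?_
      intro y hy
      simp only [Set.mem_iUnion, Finset.mem_range] at hy
      obtain ⟨i, hi, hyi⟩ := hy
      refine Set.mem_biUnion ⟨i, hi, rfl⟩ ?_
      exact lt_of_le_of_lt (mem_closedBall.mp hyi) hk
    · exact isClosed_iInter fun k => isClosed_closure
  · intro n
    have hsub : (⋂ k, closure (G k (M k)))ᶜ = ⋃ k, (closure (G k (M k)))ᶜ := by
      rw [Set.compl_iInter]
    rw [hsub]
    calc (P n : Measure E) (⋃ k, (closure (G k (M k)))ᶜ)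
        ≤ ∑' k, (P n : Measure E) (closure (G k (M k)))ᶜ := measure_iUnion_le _
      _ ≤ ∑' k, δ / 2 ^ (k + 1) := by
          apply ENNReal.tsum_le_tsum
          intro k
          exact (measure_mono (Set.compl_subset_compl.mpr subset_closure)).trans (hM k n)
      _ = δ := by
          have h2 : ∑' (k : ℕ), (2⁻¹ : ℝ≥0∞) ^ (k + 1) = 1 := by
            simp_rw [pow_succ (2⁻¹ : ℝ≥0∞)]
            rw [ENNReal.tsum_mul_right, ENNReal.tsum_geometric, ENNReal.one_sub_inv_two,
              inv_inv]
            exact ENNReal.mul_inv_cancel two_ne_zero ENNReal.ofNat_ne_top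
          calc ∑' (k : ℕ), δ / 2 ^ (k + 1)
              = ∑' (k : ℕ), (2⁻¹ : ℝ≥0∞) ^ (k + 1) * δ := by
                simp_rw [div_eq_mul_inv, ← ENNReal.inv_pow, mul_comm]
            _ = 1 * δ := by rw [ENNReal.tsum_mul_right, h2]
            _ = δ := one_mul δ

/-- If `ℙ_n → ℙ` weakly on a Polish space and `Φ_n → Φ` uniformly on compact sets
with `(Φ_n)` uniformly bounded and continuous, then `∫ Φ_n dℙ_n → ∫ Φ dℙ`. -/
theorem integral_tendsto_of_weak_convergence_and_loc_uniform {E : Type*}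
    [MetricSpace E] [CompleteSpace E] [SecondCountableTopology E]
    [MeasurableSpace E] [BorelSpace E]
    (P : ℕ → ProbabilityMeasure E) (Plim : ProbabilityMeasure E)
    (hweak : Tendsto P atTop (𝓝 Plim))
    (Φ : ℕ → E → ℝ) (Φlim : E → ℝ)
    (hcont : ∀ n, Continuous (Φ n)) (hlimcont : Continuous Φlim)
    (C : ℝ) (hbd : ∀ n x, |Φ n x| ≤ C)
    (hunif : ∀ K : Set E, IsCompact K → TendstoUniformlyOn Φ Φlim atTop K) :
    Tendsto (fun n => ∫ x, Φ n x ∂(P n : Measure E)) atTop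
      (𝓝 (∫ x, Φlim x ∂(Plim : Measure E))) := by
  have hΦlim_bd : ∀ x, |Φlim x| ≤ C := by
    intro x
    have ht : Tendsto (fun n => Φ n x) atTop (𝓝 (Φlim x)) :=
      (hunif {x} isCompact_singleton).tendsto_at (Set.mem_singleton x)
    exact le_of_tendsto ht.abs (Eventually.of_forall fun n => hbd n x)
  have hint : ∀ (f : E → ℝ), Continuous f → (∀ x, |f x| ≤ C) →
      ∀ (μ : ProbabilityMeasure E), Integrable f (μ : Measure E) := by
    intro f hf hfb μ
    exact ⟨hf.aestronglyMeasurable,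
      HasFiniteIntegral.of_bounded (C := C)
        (ae_of_all _ fun x => by rw [Real.norm_eq_abs]; exact hfb x)⟩
  -- the weak convergence part
  have hweakint : Tendsto (fun n => ∫ x, Φlim x ∂(P n : Measure E)) atTop
      (𝓝 (∫ x, Φlim x ∂(Plim : Measure E))) := by
    have := ProbabilityMeasure.tendsto_iff_forall_integral_tendsto.mp hweak
      (BoundedContinuousFunction.ofNormedAddCommGroup Φlim hlimcont C
        (fun x => by rw [Real.norm_eq_abs]; exact hΦlim_bd x))
    simpa using this
  -- the key part
  have key : Tendsto (fun n => ∫ x, (Φ n x - Φlim x) ∂(P n : Measure E)) atTop (𝓝 0) := by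
    rw [NormedAddCommGroup.tendsto_nhds_zero]
    intro ε hε
    set B : ℝ := 2 * C + 1 with hBdef
    have hC0 : 0 ≤ C := by
      rcases isEmpty_or_nonempty E with h | h
      · -- impossible: a probability measure on an empty space
        have h0 : (Plim : Measure E) Set.univ = 1 := measure_univ
        rw [Set.univ_eq_empty_iff.mpr h, measure_empty] at h0
        simp at h0
      · exact (abs_nonneg _).trans (hbd 0 h.some)
    have hB : 0 < B := by positivity
    have hδ : 0 < ε / (2 * B) := by positivity
    obtain ⟨K, hK, hKm⟩ := weak_tight P Plim hweak
      (δ := ENNReal.ofReal (ε / (2 * B))) (by simpa using hδ)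
    have hU := (Metric.tendstoUniformlyOn_iff.mp (hunif K hK)) (ε / 2) (by positivity)
    filter_upwards [hU] with n hn
    have hfint : Integrable (fun x => Φ n x - Φlim x) (P n : Measure E) :=
      (hint _ (hcont n) (hbd n) (P n)).sub (hint _ hlimcont hΦlim_bd (P n))
    have hKc : MeasurableSet (Kᶜ : Set E) := hK.isClosed.measurableSet.compl
    have hiind : Integrable (fun x : E => Set.indicator Kᶜ (fun _ => 2 * C) x)
        (P n : Measure E) := (integrable_const (2 * C)).indicator hKc
    have step1 : ‖∫ x, (Φ n x - Φlim x) ∂(P n : Measure E)‖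
        ≤ ∫ x, (ε / 2 + Set.indicator Kᶜ (fun _ => 2 * C) x) ∂(P n : Measure E) := by
      refine (norm_integral_le_integral_norm _).trans ?_
      apply integral_mono hfint.norm ((integrable_const _).add hiind)
      intro x
      simp only [Pi.add_apply]
      by_cases hx : x ∈ K
      · have hd := hn x hx
        rw [Set.indicator_of_notMem (by simpa using hx), add_zero, Real.norm_eq_abs,
          abs_sub_comm]
        rw [Real.dist_eq] at hd
        exact hd.le
      · rw [Set.indicator_of_mem (by simpa using hx)]
        have h2 : ‖Φ n x - Φlim x‖ ≤ 2 * C := by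
          rw [Real.norm_eq_abs]
          calc |Φ n x - Φlim x| ≤ |Φ n x| + |Φlim x| := abs_sub _ _
            _ ≤ C + C := add_le_add (hbd n x) (hΦlim_bd x)
            _ = 2 * C := by ring
        linarith
    have step2 : ∫ x, (ε / 2 + Set.indicator Kᶜ (fun _ => 2 * C) x) ∂(P n : Measure E)
        = ε / 2 + ((P n : Measure E) Kᶜ).toReal * (2 * C) := by
      rw [integral_add (integrable_const _) hiind, integral_const, integral_indicator_const _ hKc]
      simp [measure_univ]
      exact Or.inl rfl
    have step3 : ((P n : Measure E) Kᶜ).toReal * (2 * C) ≤ (ε / (2 * B)) * (2 * C) := by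
      apply mul_le_mul_of_nonneg_right _ (by positivity)
      exact ENNReal.toReal_le_of_le_ofReal hδ.le (hKm n)
    have step4 : (ε / (2 * B)) * (2 * C) < ε / 2 := by
      have h2C : 2 * C < B := by rw [hBdef]; linarith
      have := mul_lt_mul_of_pos_left h2C hδ
      calc (ε / (2 * B)) * (2 * C) = ε / (2 * B) * (2 * C) := rfl
        _ < ε / (2 * B) * B := this
        _ = ε / 2 := by field_simp
    calc ‖∫ x, (Φ n x - Φlim x) ∂(P n : Measure E)‖
        ≤ ε / 2 + ((P n : Measure E) Kᶜ).toReal * (2 * C) := step2 ▸ step1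
      _ < ε := by linarith
  -- combine
  have hrw : (fun n => ∫ x, Φ n x ∂(P n : Measure E))
      = fun n => (∫ x, (Φ n x - Φlim x) ∂(P n : Measure E))
        + ∫ x, Φlim x ∂(P n : Measure E) := by
    funext n
    rw [integral_sub (hint _ (hcont n) (hbd n) (P n)) (hint _ hlimcont hΦlim_bd (P n))]
    ring
  rw [hrw]
  simpa using key.add hweakint
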